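/- The map $\mu\mapsto \phi_\mu$ from $(-\pi^2,\infty)$ to $L^2(0,1)$ satisfies the Vakhitov–Kolokolov condition $\langle \partial_\mu\phi_\mu,\phi_\mu\rangle > 0$ for every $\mu\in(-\pi^2,\infty)$, i.e. $\mu \mapsto \|\phi_\mu\|_{L^2}^2$ is strictly increasing. -/

import Mathlib

set_option maxHeartbeats 1000000

open Set intervalIntegral MeasureTheory

noncomputable def gInt (j : ℕ) (m : ℝ) : ℝ :=
  ∫ t in (0:ℝ)..1, t ^ j / Real.sqrt ((1 - t ^ 2) * (t ^ 2 + 1 - m))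

lemma rpow_neg_half_eq {y : ℝ} (hy : 0 ≤ y) : y ^ (-(1/2) : ℝ) = (Real.sqrt y)⁻¹ := by
  rw [Real.rpow_neg hy, Real.sqrt_eq_rpow]

lemma gInt_integrable (j : ℕ) {m : ℝ} (hm : m < 1) :
    IntervalIntegrable (fun t => t ^ j / Real.sqrt ((1 - t ^ 2) * (t ^ 2 + 1 - m)))
      volume 0 1 := by
  have hbase : IntervalIntegrable (fun x : ℝ => x ^ (-(1/2) : ℝ)) volume 0 1 :=
    intervalIntegrable_rpow' (by norm_num)
  have hrefl : IntervalIntegrable (fun x : ℝ => (1 - x) ^ (-(1/2) : ℝ)) volume 0 1 := by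
    have := (hbase.comp_sub_left 1)
    simpa using this.symm
  have hdom : IntervalIntegrable
      (fun x : ℝ => (1 - m) ^ (-(1/2) : ℝ) * (1 - x) ^ (-(1/2) : ℝ)) volume 0 1 :=
    hrefl.const_mul _
  refine hdom.mono_fun ?_ ?_
  · refine Measurable.aestronglyMeasurable ?_
    exact (measurable_id.pow_const j).div
      ((Real.continuous_sqrt.comp (by continuity)).measurable)
  · filter_upwards [MeasureTheory.ae_restrict_mem measurableSet_uIoc] with t ht
    have ht' : t ∈ Set.Ioc (0:ℝ) 1 := by
      rwa [Set.uIoc_of_le (by norm_num : (0:ℝ) ≤ 1)] at ht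
    have h0 : 0 < t := ht'.1
    have hfac2 : (0:ℝ) < 1 - m := by linarith
    have hRHS : ‖(1 - m) ^ (-(1/2) : ℝ) * (1 - t) ^ (-(1/2) : ℝ)‖ =
        (1 - m) ^ (-(1/2) : ℝ) * (1 - t) ^ (-(1/2) : ℝ) := by
      rw [Real.norm_eq_abs, abs_of_nonneg (mul_nonneg (Real.rpow_nonneg (by linarith) _)
        (Real.rpow_nonneg (by linarith [ht'.2]) _))]
    rw [hRHS, Real.norm_eq_abs]
    rcases eq_or_lt_of_le ht'.2 with h1 | h1
    · subst h1
      have : ((1:ℝ) - 1 ^ 2 : ℝ) = 0 := by norm_num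
      rw [this]
      simp only [zero_mul, Real.sqrt_zero, div_zero, abs_zero]
      apply mul_nonneg (Real.rpow_nonneg (by linarith) _) (Real.rpow_nonneg (by norm_num) _)
    · have hfac1 : (0:ℝ) < 1 - t := by linarith
      have e1 : (1 - t : ℝ) ≤ 1 - t ^ 2 := by nlinarith
      have e2 : (1 - m : ℝ) ≤ t ^ 2 + 1 - m := by nlinarith
      have hsq : Real.sqrt (1 - t) * Real.sqrt (1 - m) ≤
          Real.sqrt ((1 - t ^ 2) * (t ^ 2 + 1 - m)) := by
        rw [← Real.sqrt_mul hfac1.le]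
        apply Real.sqrt_le_sqrt
        exact mul_le_mul e1 e2 hfac2.le (by nlinarith)
      have hsqpos : 0 < Real.sqrt (1 - t) * Real.sqrt (1 - m) := by
        apply mul_pos <;> [exact Real.sqrt_pos.2 hfac1; exact Real.sqrt_pos.2 hfac2]
      have htj : |t ^ j| ≤ 1 := by
        rw [abs_of_nonneg (by positivity)]
        exact pow_le_one₀ h0.le ht'.2
      have key : |t ^ j / Real.sqrt ((1 - t ^ 2) * (t ^ 2 + 1 - m))| ≤
          1 / (Real.sqrt (1 - t) * Real.sqrt (1 - m)) := by
        rw [abs_div, abs_of_nonneg (Real.sqrt_nonneg _)]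
        exact div_le_div₀ (by norm_num) htj hsqpos hsq
      refine key.trans (le_of_eq ?_)
      rw [rpow_neg_half_eq hfac2.le, rpow_neg_half_eq hfac1.le]
      rw [one_div, mul_inv]
      ring

lemma gInt_pos (j : ℕ) {m : ℝ} (hm : m < 1) : 0 < gInt j m := by
  apply intervalIntegral_pos_of_pos_on (gInt_integrable j hm)
  · intro t ht
    have h0 : 0 < t := ht.1
    have h1 : (0:ℝ) < 1 - t ^ 2 := by nlinarith [ht.1, ht.2]
    have h2 : (0:ℝ) < t ^ 2 + 1 - m := by nlinarith [sq_nonneg t]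
    have : 0 < Real.sqrt ((1 - t ^ 2) * (t ^ 2 + 1 - m)) :=
      Real.sqrt_pos.2 (mul_pos h1 h2)
    positivity
  · norm_num

lemma gInt_strictMono (j : ℕ) {m₁ m₂ : ℝ} (h12 : m₁ < m₂) (hm : m₂ < 1) :
    gInt j m₁ < gInt j m₂ := by
  have hm₁ : m₁ < 1 := h12.trans hm
  have hi₁ := gInt_integrable j hm₁
  have hi₂ := gInt_integrable j hm
  rw [← sub_pos, gInt, gInt, ← intervalIntegral.integral_sub hi₂ hi₁]
  apply intervalIntegral_pos_of_pos_on (hi₂.sub hi₁)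
  · intro t ht
    have h1 : (0:ℝ) < 1 - t ^ 2 := by nlinarith [ht.1, ht.2]
    have h2 : (0:ℝ) < t ^ 2 + 1 - m₂ := by nlinarith [sq_nonneg t]
    have h2' : (0:ℝ) < t ^ 2 + 1 - m₁ := by linarith
    have hlt : (1 - t ^ 2) * (t ^ 2 + 1 - m₂) < (1 - t ^ 2) * (t ^ 2 + 1 - m₁) := by
      apply mul_lt_mul_of_pos_left (by linarith) h1
    have hs2 : 0 < Real.sqrt ((1 - t ^ 2) * (t ^ 2 + 1 - m₂)) :=
      Real.sqrt_pos.2 (mul_pos h1 h2)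
    have hs : Real.sqrt ((1 - t ^ 2) * (t ^ 2 + 1 - m₂)) <
        Real.sqrt ((1 - t ^ 2) * (t ^ 2 + 1 - m₁)) :=
      Real.sqrt_lt_sqrt (mul_pos h1 h2).le hlt
    have htj : (0:ℝ) < t ^ j := pow_pos ht.1 j
    have : t ^ j / Real.sqrt ((1 - t ^ 2) * (t ^ 2 + 1 - m₁)) <
        t ^ j / Real.sqrt ((1 - t ^ 2) * (t ^ 2 + 1 - m₂)) :=
      div_lt_div_of_pos_left htj hs2 hs
    linarith
  · norm_num

lemma sqrt_mul_gInt_lt {c₁ c₂ : ℝ} (h2 : 0 < c₂) (h12 : c₂ < c₁) :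
    Real.sqrt c₂ * gInt 0 (-c₂) < Real.sqrt c₁ * gInt 0 (-c₁) := by
  have h1 : 0 < c₁ := h2.trans h12
  have key : ∀ c : ℝ, 0 < c → Real.sqrt c * gInt 0 (-c) =
      ∫ t in (0:ℝ)..1, Real.sqrt c * (t ^ 0 / Real.sqrt ((1 - t ^ 2) * (t ^ 2 + 1 - -c))) := by
    intro c hc
    rw [gInt, ← intervalIntegral.integral_const_mul]
  rw [key c₁ h1, key c₂ h2, ← sub_pos, ← intervalIntegral.integral_sub
    (((gInt_integrable 0 (by linarith : -c₁ < 1))).const_mul _)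
    (((gInt_integrable 0 (by linarith : -c₂ < 1))).const_mul _)]
  apply intervalIntegral_pos_of_pos_on
  · exact (((gInt_integrable 0 (by linarith : -c₁ < 1))).const_mul _).sub
      (((gInt_integrable 0 (by linarith : -c₂ < 1))).const_mul _)
  · intro t ht
    have h0t : 0 < t := ht.1
    have hA : (0:ℝ) < 1 - t ^ 2 := by nlinarith [ht.2]
    have hD₁ : (0:ℝ) < (1 - t ^ 2) * (t ^ 2 + 1 + c₁) := by nlinarith [sq_nonneg t]
    have hD₂ : (0:ℝ) < (1 - t ^ 2) * (t ^ 2 + 1 + c₂) := by nlinarith [sq_nonneg t]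
    have hcross : c₂ * ((1 - t ^ 2) * (t ^ 2 + 1 + c₁)) <
        c₁ * ((1 - t ^ 2) * (t ^ 2 + 1 + c₂)) := by
      have expand : c₁ * ((1 - t ^ 2) * (t ^ 2 + 1 + c₂)) -
          c₂ * ((1 - t ^ 2) * (t ^ 2 + 1 + c₁)) = (1 - t ^ 2) * ((t ^ 2 + 1) * (c₁ - c₂)) := by
        ring
      have hpos : 0 < (1 - t ^ 2) * ((t ^ 2 + 1) * (c₁ - c₂)) := by
        apply mul_pos hA (mul_pos (by positivity) (by linarith))
      linarith
    have hs₁ : 0 < Real.sqrt ((1 - t ^ 2) * (t ^ 2 + 1 + c₁)) := Real.sqrt_pos.2 hD₁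
    have hs₂ : 0 < Real.sqrt ((1 - t ^ 2) * (t ^ 2 + 1 + c₂)) := Real.sqrt_pos.2 hD₂
    have hmain : Real.sqrt c₂ / Real.sqrt ((1 - t ^ 2) * (t ^ 2 + 1 + c₂)) <
        Real.sqrt c₁ / Real.sqrt ((1 - t ^ 2) * (t ^ 2 + 1 + c₁)) := by
      rw [div_lt_div_iff₀ hs₂ hs₁, ← Real.sqrt_mul h2.le, ← Real.sqrt_mul h1.le]
      exact Real.sqrt_lt_sqrt (by positivity) hcross
    have e : ∀ c : ℝ, t ^ 2 + 1 - -c = t ^ 2 + 1 + c := fun c => by ring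
    simp only [pow_zero, e]
    rw [mul_one_div, mul_one_div]
    linarith
  · norm_num

lemma muMap_strictMono {m₁ m₂ : ℝ} (h12 : m₁ < m₂) (hm : m₂ < 1) :
    4 * m₁ * gInt 0 m₁ ^ 2 < 4 * m₂ * gInt 0 m₂ ^ 2 := by
  have hm₁ : m₁ < 1 := h12.trans hm
  have hg₁ : 0 < gInt 0 m₁ := gInt_pos 0 hm₁
  have hg₂ : 0 < gInt 0 m₂ := gInt_pos 0 hm
  rcases lt_or_ge 0 m₁ with hp | hnp
  · have hgm : gInt 0 m₁ < gInt 0 m₂ := gInt_strictMono 0 h12 hm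
    have hsq : gInt 0 m₁ ^ 2 < gInt 0 m₂ ^ 2 := by nlinarith
    nlinarith [pow_pos hg₁ 2, pow_pos hg₂ 2]
  rcases lt_or_ge 0 m₂ with hp₂ | hnp₂
  · nlinarith [pow_pos hg₁ 2, pow_pos hg₂ 2]
  -- m₁ < m₂ ≤ 0
  rcases eq_or_lt_of_le hnp₂ with h0 | hneg
  · subst h0; nlinarith [pow_pos hg₁ 2]
  · set c₁ := -m₁ with hc₁
    set c₂ := -m₂ with hc₂
    have h2 : 0 < c₂ := by simp [hc₂]; linarith
    have h12' : c₂ < c₁ := by simp [hc₁, hc₂]; linarith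
    have hkey := sqrt_mul_gInt_lt h2 h12'
    have hnn : 0 ≤ Real.sqrt c₂ * gInt 0 (-c₂) := by
      apply mul_nonneg (Real.sqrt_nonneg _) (gInt_pos 0 (by linarith : -c₂ < 1)).le
    have hsq : (Real.sqrt c₂ * gInt 0 (-c₂)) ^ 2 < (Real.sqrt c₁ * gInt 0 (-c₁)) ^ 2 := by
      exact pow_lt_pow_left₀ hkey hnn (by norm_num)
    have e₁ : (Real.sqrt c₁ * gInt 0 (-c₁)) ^ 2 = c₁ * gInt 0 m₁ ^ 2 := by
      rw [mul_pow, Real.sq_sqrt (by linarith : (0:ℝ) ≤ c₁)]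
      simp [hc₁]
    have e₂ : (Real.sqrt c₂ * gInt 0 (-c₂)) ^ 2 = c₂ * gInt 0 m₂ ^ 2 := by
      rw [mul_pow, Real.sq_sqrt h2.le]
      simp [hc₂]
    rw [e₁, e₂] at hsq
    have : c₂ * gInt 0 m₂ ^ 2 < c₁ * gInt 0 m₁ ^ 2 := hsq
    simp only [hc₁, hc₂] at this
    nlinarith

/-- The focusing ground state predicate. -/
def IsGroundState (μ : ℝ) (φ : ℝ → ℝ) : Prop :=
  ∃ φ' φ'' φ''' : ℝ → ℝ,
    (∀ x ∈ Set.Icc (0:ℝ) 1, HasDerivAt φ (φ' x) x ∧ HasDerivAt φ' (φ'' x) x ∧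
      HasDerivAt φ'' (φ''' x) x) ∧
    ContinuousOn φ''' (Set.Icc 0 1) ∧
    φ 0 = 0 ∧ φ 1 = 0 ∧
    (∀ x ∈ Set.Ioo (0:ℝ) 1, 0 < φ x) ∧
    (∀ x ∈ Set.Icc (0:ℝ) 1, φ'' x + φ x ^ 3 = μ * φ x)

lemma ground_state_key {μ : ℝ} {φ : ℝ → ℝ} (h : IsGroundState μ φ) :
    ∃ m : ℝ, m < 1 ∧ μ = 4 * m * gInt 0 m ^ 2 ∧
      (∫ x in (0:ℝ)..1, φ x ^ 2) = 8 * gInt 0 m * gInt 2 m := by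
  obtain ⟨p, q, r, hder, hcontr, h0, h1, hpos, heq⟩ := h
  have hφd : ∀ x ∈ Icc (0:ℝ) 1, HasDerivAt φ (p x) x := fun x hx => (hder x hx).1
  have hpd : ∀ x ∈ Icc (0:ℝ) 1, HasDerivAt p (q x) x := fun x hx => (hder x hx).2.1
  have hφc : ContinuousOn φ (Icc 0 1) :=
    fun x hx => ((hφd x hx).continuousAt).continuousWithinAt
  have hpc : ContinuousOn p (Icc 0 1) :=
    fun x hx => ((hpd x hx).continuousAt).continuousWithinAt
  have φnn : ∀ x ∈ Icc (0:ℝ) 1, 0 ≤ φ x := by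
    intro x hx
    rcases eq_or_lt_of_le hx.1 with h' | h'
    · rw [← h', h0]
    rcases eq_or_lt_of_le hx.2 with h'' | h''
    · rw [h'', h1]
    · exact (hpos x ⟨h', h''⟩).le
  set a := p 0 with ha
  -- energy conservation
  have energy : ∀ x ∈ Icc (0:ℝ) 1, p x ^ 2 + φ x ^ 4 / 2 - μ * φ x ^ 2 = a ^ 2 := by
    intro x hx
    have hsub : Icc (0:ℝ) x ⊆ Icc 0 1 := Icc_subset_Icc le_rfl hx.2
    have hE := constant_of_has_deriv_right_zero
      (f := fun y => p y ^ 2 + φ y ^ 4 / 2 - μ * φ y ^ 2) (a := 0) (b := x)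
      (by
        apply ContinuousOn.sub
        apply ContinuousOn.add
        · exact ((hpc.mono hsub).pow 2)
        · exact (((hφc.mono hsub).pow 4).div_const 2)
        · exact ((hφc.mono hsub).pow 2).const_smul μ |>.congr (fun y _ => by simp [smul_eq_mul]))
      (by
        intro y hy
        have hy' : y ∈ Icc (0:ℝ) 1 := ⟨hy.1, hy.2.le.trans hx.2⟩
        have hd : HasDerivAt (fun y => p y ^ 2 + φ y ^ 4 / 2 - μ * φ y ^ 2)
            (2 * p y * q y + 4 * φ y ^ 3 * p y / 2 - μ * (2 * φ y * p y)) y := by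
          have e1 : HasDerivAt (fun y => p y ^ 2) (2 * p y * q y) y := by
            simpa [mul_comm] using ((hpd y hy').fun_pow 2)
          have e2 : HasDerivAt (fun y => φ y ^ 4 / 2) (4 * φ y ^ 3 * p y / 2) y := by
            simpa [mul_comm] using (((hφd y hy').pow 4).div_const 2)
          have e3 : HasDerivAt (fun y => μ * φ y ^ 2) (μ * (2 * φ y * p y)) y := by
            simpa [mul_comm] using (((hφd y hy').pow 2).const_mul μ)
          exact (e1.add e2).sub e3
        have hzero : 2 * p y * q y + 4 * φ y ^ 3 * p y / 2 - μ * (2 * φ y * p y) = 0 := by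
          have := heq y hy'
          linear_combination (2 * p y) * this
        rw [hzero] at hd
        exact hd.hasDerivWithinAt)
      x (by exact ⟨hx.1, le_refl x⟩)
    simpa [h0] using hE
  -- p 0 ≥ 0
  have ha_nonneg : 0 ≤ a := by
    have hda : HasDerivAt φ a 0 := hφd 0 (by norm_num)
    have hslope := (hda.hasDerivWithinAt (s := Ioi (0:ℝ)))
    rw [hasDerivWithinAt_iff_tendsto_slope] at hslope
    have hset : (Ioi (0:ℝ)) \ {0} = Ioi 0 := by
      apply diff_singleton_eq_self; simp
    rw [hset] at hslope
    refine ge_of_tendsto hslope ?_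
    filter_upwards [Ioo_mem_nhdsGT_of_mem (by norm_num : (0:ℝ) ∈ Ico (0:ℝ) 1)] with y hy
    rw [slope_def_field]
    have hy' := hpos y hy
    have h0y : 0 < y := hy.1
    rw [h0]
    apply div_nonneg (by linarith) (by linarith)
  -- p 1 ≤ 0
  have hp1_nonpos : p 1 ≤ 0 := by
    have hda : HasDerivAt φ (p 1) 1 := hφd 1 (by norm_num)
    have hslope := (hda.hasDerivWithinAt (s := Iio (1:ℝ)))
    rw [hasDerivWithinAt_iff_tendsto_slope] at hslope
    have hset : (Iio (1:ℝ)) \ {1} = Iio 1 := by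
      apply diff_singleton_eq_self; simp
    rw [hset] at hslope
    refine le_of_tendsto hslope ?_
    filter_upwards [Ioo_mem_nhdsLT_of_mem (by norm_num : (1:ℝ) ∈ Ioc (0:ℝ) 1)] with y hy
    rw [slope_def_field]
    have h1y := hpos y hy
    have hylt : y - 1 < 0 := by linarith [hy.2]
    rw [h1]
    apply div_nonpos_of_nonneg_of_nonpos (by linarith) hylt.le
  -- a ≠ 0
  have ha_ne : a ≠ 0 := by
    intro ha0
    have hE : ∀ x ∈ Icc (0:ℝ) 1, p x ^ 2 = μ * φ x ^ 2 - φ x ^ 4 / 2 := by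
      intro x hx
      have := energy x hx
      rw [ha0] at this
      nlinarith [this]
    have hhalf : 0 < φ (1/2) := hpos _ (by norm_num)
    rcases le_or_gt μ 0 with hμ | hμ
    · have := hE (1/2) (by norm_num)
      nlinarith [sq_nonneg (p (1/2)), pow_pos hhalf 2, pow_pos hhalf 4]
    · have hb : ∀ x ∈ Icc (0:ℝ) 1, p x ≤ Real.sqrt μ * φ x := by
        intro x hx
        have h2 : p x ^ 2 ≤ (Real.sqrt μ * φ x) ^ 2 := by
          rw [mul_pow, Real.sq_sqrt hμ.le]
          have := hE x hx
          nlinarith [pow_nonneg (φnn x hx) 4]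
        have hnn : 0 ≤ Real.sqrt μ * φ x := mul_nonneg (Real.sqrt_nonneg _) (φnn x hx)
        nlinarith [h2, hnn]
      have hexp : ∀ x : ℝ, HasDerivAt (fun y => Real.exp (-(Real.sqrt μ) * y))
          (Real.exp (-(Real.sqrt μ) * x) * (-(Real.sqrt μ))) x := by
        intro x
        have h' := ((hasDerivAt_id x).const_mul (-(Real.sqrt μ))).exp
        simpa using h'
      have hanti : AntitoneOn (fun x => φ x * Real.exp (-(Real.sqrt μ) * x)) (Icc 0 1) := by
        apply antitoneOn_of_deriv_nonpos (convex_Icc 0 1)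
        · exact hφc.mul (Real.continuous_exp.comp (by continuity)).continuousOn
        · intro x hx
          rw [interior_Icc] at hx
          exact (((hφd x (Ioo_subset_Icc_self hx)).mul (hexp x)).differentiableAt).differentiableWithinAt
        · intro x hx
          rw [interior_Icc] at hx
          have hx' : x ∈ Icc (0:ℝ) 1 := Ioo_subset_Icc_self hx
          have hd := (hφd x hx').fun_mul (hexp x)
          rw [hd.deriv]
          have hbb := hb x hx'
          have hepos : 0 < Real.exp (-(Real.sqrt μ) * x) := Real.exp_pos _
          nlinarith [hbb, hepos]
      have := hanti (by norm_num : (0:ℝ) ∈ Icc (0:ℝ) 1)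
        (by norm_num : (1/2:ℝ) ∈ Icc (0:ℝ) 1) (by norm_num)
      simp only [h0, zero_mul] at this
      nlinarith [this, Real.exp_pos (-(Real.sqrt μ) * (1/2:ℝ)), hhalf]
  have ha_pos : 0 < a := lt_of_le_of_ne ha_nonneg (Ne.symm ha_ne)
  -- amplitude
  obtain ⟨S, hS⟩ : ∃ s : ℝ, s = Real.sqrt (μ^2 + 2*a^2) := ⟨_, rfl⟩
  have hSsq : S^2 = μ^2 + 2*a^2 := by rw [hS]; exact Real.sq_sqrt (by positivity)
  have hμS : |μ| < S := by
    rw [hS, ← Real.sqrt_sq_eq_abs]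
    exact Real.sqrt_lt_sqrt (sq_nonneg μ) (by nlinarith [ha_pos])
  have habs := abs_lt.1 hμS
  have hApos2 : 0 < μ + S := by linarith [habs.1]
  obtain ⟨A, hA⟩ : ∃ s : ℝ, s = Real.sqrt (μ + S) := ⟨_, rfl⟩
  have hAsq : A^2 = μ + S := by rw [hA]; exact Real.sq_sqrt hApos2.le
  have hApos : 0 < A := by rw [hA]; exact Real.sqrt_pos.2 hApos2
  have hC2pos : 0 < S - μ := by linarith [habs.2]
  have factored : ∀ x ∈ Icc (0:ℝ) 1, 2 * p x ^ 2 = (A^2 - φ x^2) * (φ x^2 + (S - μ)) := by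
    intro x hx
    have hE := energy x hx
    linear_combination 2 * hE - (φ x ^ 2 + (S - μ)) * hAsq - hSsq
  have hφleA : ∀ x ∈ Icc (0:ℝ) 1, φ x ≤ A := by
    intro x hx
    have hf := factored x hx
    have h2' : 0 < φ x ^ 2 + (S - μ) := by
      have := sq_nonneg (φ x); linarith
    have h3 : 0 ≤ A ^ 2 - φ x ^ 2 := by
      by_contra hneg
      push_neg at hneg
      have : (A ^ 2 - φ x ^ 2) * (φ x ^ 2 + (S - μ)) < 0 := mul_neg_of_neg_of_pos hneg h2'
      nlinarith [sq_nonneg (p x)]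
    nlinarith [φnn x hx, hApos, h3]
  -- p 1 = -a
  have hp1 : p 1 = -a := by
    have hE := energy 1 (by norm_num)
    rw [h1] at hE
    have : p 1 ^ 2 = a ^ 2 := by nlinarith [hE]
    nlinarith [hp1_nonpos, ha_pos, this]
  -- first zero of p
  have hSpos : 0 < S := lt_of_le_of_lt (abs_nonneg μ) hμS
  have hZne : ∃ x ∈ Icc (0:ℝ) 1, p x = 0 := by
    have hsub := intermediate_value_Icc' (by norm_num : (0:ℝ) ≤ 1) hpc
    have h0mem : (0:ℝ) ∈ Icc (p 1) (p 0) := by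
      rw [hp1]
      exact ⟨by linarith, by rw [← ha]; linarith⟩
    obtain ⟨x, hx, hpx⟩ := hsub h0mem
    exact ⟨x, hx, hpx⟩
  set Z := {x | x ∈ Icc (0:ℝ) 1 ∧ p x = 0} with hZdef
  have hZclosed : IsClosed Z := by
    have : Z = Icc (0:ℝ) 1 ∩ p ⁻¹' {0} := by ext t; simp [hZdef]
    rw [this]
    exact hpc.preimage_isClosed_of_isClosed isClosed_Icc isClosed_singleton
  have hZne' : Z.Nonempty := by obtain ⟨x, hx, hp'⟩ := hZne; exact ⟨x, hx, hp'⟩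
  have hZbdd : BddBelow Z := ⟨0, fun z hz => hz.1.1⟩
  set x₁ := sInf Z with hx₁def
  have hx₁Z : x₁ ∈ Z := hZclosed.csInf_mem hZne' hZbdd
  have hpx₁ : p x₁ = 0 := hx₁Z.2
  have hx₁I : x₁ ∈ Icc (0:ℝ) 1 := hx₁Z.1
  have hx₁0 : 0 < x₁ := by
    rcases eq_or_lt_of_le hx₁I.1 with h' | h'
    · exfalso
      rw [← h'] at hpx₁
      rw [ha] at ha_ne
      exact ha_ne hpx₁
    · exact h'
  have hx₁1 : x₁ < 1 := by
    rcases eq_or_lt_of_le hx₁I.2 with h' | h'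
    · exfalso
      rw [h', hp1] at hpx₁
      linarith
    · exact h'
  have hppos : ∀ y ∈ Ico (0:ℝ) x₁, 0 < p y := by
    intro y hy
    have hyI : y ∈ Icc (0:ℝ) 1 := ⟨hy.1, hy.2.le.trans hx₁I.2⟩
    rcases lt_trichotomy (p y) 0 with hneg | h0' | hposy
    · exfalso
      obtain ⟨z, hz, hpz⟩ := intermediate_value_Icc' hy.1
        (hpc.mono (Icc_subset_Icc le_rfl hyI.2))
        (show (0:ℝ) ∈ Icc (p y) (p 0) from ⟨hneg.le, by rw [← ha]; exact ha_pos.le⟩)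
      have : x₁ ≤ z := csInf_le hZbdd ⟨⟨hz.1, hz.2.trans hyI.2⟩, hpz⟩
      linarith [hz.2, hy.2]
    · exfalso
      have : x₁ ≤ y := csInf_le hZbdd ⟨hyI, h0'⟩
      linarith [hy.2]
    · exact hposy
  -- at any interior zero of p, φ = A and q < 0, so p crosses downward
  have hφatzero : ∀ z ∈ Icc (0:ℝ) 1, p z = 0 → φ z = A := by
    intro z hzI hpz
    have hf := factored z hzI
    rw [hpz] at hf
    have h2' : 0 < φ z ^ 2 + (S - μ) := by nlinarith [sq_nonneg (φ z)]
    have h3 : A ^ 2 - φ z ^ 2 = 0 := by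
      rcases mul_eq_zero.1 (by linarith : (A ^ 2 - φ z ^ 2) * (φ z ^ 2 + (S - μ)) = 0) with h' | h'
      · exact h'
      · linarith
    nlinarith [φnn z hzI, hApos]
  have hcross : ∀ z ∈ Ioo (0:ℝ) 1, p z = 0 →
      (∀ᶠ x in nhdsWithin z (Ioi z), p x < 0) ∧ (∀ᶠ x in nhdsWithin z (Iio z), 0 < p x) := by
    intro z hz hpz
    have hzI : z ∈ Icc (0:ℝ) 1 := Ioo_subset_Icc_self hz
    have hφz : φ z = A := hφatzero z hzI hpz
    have hqz : q z = -(A * S) := by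
      have heqz := heq z hzI
      rw [hφz] at heqz
      linear_combination heqz - A * hAsq
    have hqneg : q z < 0 := by
      rw [hqz]
      nlinarith [hApos, hSpos]
    have hdz : HasDerivAt p (q z) z := hpd z hzI
    constructor
    · have hslope := hdz.hasDerivWithinAt (s := Ioi z)
      rw [hasDerivWithinAt_iff_tendsto_slope] at hslope
      have hset : (Ioi z) \ {z} = Ioi z := by
        apply diff_singleton_eq_self; simp
      rw [hset] at hslope
      filter_upwards [hslope.eventually_lt_const hqneg,
        self_mem_nhdsWithin] with x hx1 hx2
      rw [slope_def_field, hpz, sub_zero] at hx1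
      have hxz : 0 < x - z := by simp only [mem_Ioi] at hx2; linarith
      by_contra hcon
      push_neg at hcon
      have : 0 ≤ p x / (x - z) := div_nonneg hcon hxz.le
      linarith
    · have hslope := hdz.hasDerivWithinAt (s := Iio z)
      rw [hasDerivWithinAt_iff_tendsto_slope] at hslope
      have hset : (Iio z) \ {z} = Iio z := by
        apply diff_singleton_eq_self; simp
      rw [hset] at hslope
      filter_upwards [hslope.eventually_lt_const hqneg,
        self_mem_nhdsWithin] with x hx1 hx2
      rw [slope_def_field, hpz, sub_zero] at hx1
      have hxz : x - z < 0 := by simp only [mem_Iio] at hx2; linarith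
      by_contra hcon
      push_neg at hcon
      have : 0 ≤ p x / (x - z) := div_nonneg_of_nonpos hcon hxz.le
      linarith
  -- p < 0 after x₁
  have hpneg : ∀ y ∈ Ioc x₁ 1, p y < 0 := by
    intro y hy
    by_contra hcon
    push_neg at hcon
    obtain ⟨hev, _⟩ := hcross x₁ ⟨hx₁0, hx₁1⟩ hpx₁
    have hmem : Ioo x₁ y ∈ nhdsWithin x₁ (Ioi x₁) :=
      Ioo_mem_nhdsGT_of_mem ⟨le_refl _, hy.1⟩
    have hmem' : ∀ᶠ x in nhdsWithin x₁ (Ioi x₁), x ∈ Ioo x₁ y := hmem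
    obtain ⟨w, hw1, hw2⟩ := (hev.and hmem').exists
    have hwy : w ≤ y := hw2.2.le
    have hwI : w ∈ Icc (0:ℝ) 1 := ⟨by linarith [hx₁0, hw2.1], by linarith [hy.2, hw2.2]⟩
    set Z' := {x | x ∈ Icc w y ∧ p x = 0} with hZ'def
    have hZ'ne : Z'.Nonempty := by
      obtain ⟨z, hz, hpz⟩ := intermediate_value_Icc hwy
        (hpc.mono (Icc_subset_Icc hwI.1 hy.2)) ⟨hw1.le, hcon⟩
      exact ⟨z, hz, hpz⟩
    have hZ'closed : IsClosed Z' := by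
      have : Z' = Icc w y ∩ p ⁻¹' {0} := by ext t; simp [hZ'def]
      rw [this]
      exact (hpc.mono (Icc_subset_Icc hwI.1 hy.2)).preimage_isClosed_of_isClosed
        isClosed_Icc isClosed_singleton
    have hZ'bdd : BddBelow Z' := ⟨w, fun z hz => hz.1.1⟩
    set z := sInf Z' with hzdef
    have hzZ : z ∈ Z' := hZ'closed.csInf_mem hZ'ne hZ'bdd
    have hzw : w < z := by
      rcases eq_or_lt_of_le hzZ.1.1 with h' | h'
      · exfalso
        rw [← h'] at hzZ
        have := hzZ.2
        linarith [hw1]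
      · exact h'
    have hzIoo : z ∈ Ioo (0:ℝ) 1 := by
      constructor
      · linarith [hwI.1, hx₁0, hw2.1]
      · rcases eq_or_lt_of_le (hzZ.1.2.trans hy.2) with h' | h'
        · exfalso
          have := hzZ.2
          rw [h', hp1] at this
          linarith
        · exact h'
    have hneg' : ∀ v ∈ Ico w z, p v < 0 := by
      intro v hv
      have hvI : v ∈ Icc w y := ⟨hv.1, by linarith [hv.2, hzZ.1.2]⟩
      rcases lt_trichotomy (p v) 0 with h' | h' | h'
      · exact h'
      · exfalso
        have : z ≤ v := csInf_le hZ'bdd ⟨hvI, h'⟩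
        linarith [hv.2]
      · exfalso
        obtain ⟨u, hu, hpu⟩ := intermediate_value_Icc hv.1
          (hpc.mono (Icc_subset_Icc hwI.1 (hvI.2.trans hy.2))) ⟨hw1.le, h'.le⟩
        have : z ≤ u := csInf_le hZ'bdd ⟨⟨hu.1, hu.2.trans hvI.2⟩, hpu⟩
        linarith [hu.2, hv.2]
    obtain ⟨_, hev2⟩ := hcross z hzIoo hzZ.2
    have hmem2 : Ioo w z ∈ nhdsWithin z (Iio z) :=
      Ioo_mem_nhdsLT_of_mem ⟨hzw, le_refl _⟩
    have hmem2' : ∀ᶠ x in nhdsWithin z (Iio z), x ∈ Ioo w z := hmem2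
    obtain ⟨v, hv1, hv2⟩ := (hev2.and hmem2').exists
    exact absurd hv1 (not_lt.2 (hneg' v ⟨hv2.1.le, hv2.2⟩).le)
  -- amplitude at x₁, monotone structure
  have hφx₁ : φ x₁ = A := hφatzero x₁ hx₁I hpx₁
  have hmono : StrictMonoOn φ (Icc 0 x₁) := by
    apply strictMonoOn_of_deriv_pos (convex_Icc 0 x₁)
      (hφc.mono (Icc_subset_Icc le_rfl hx₁I.2))
    intro x hx
    rw [interior_Icc] at hx
    have hxI : x ∈ Icc (0:ℝ) 1 := ⟨hx.1.le, by linarith [hx.2, hx₁1]⟩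
    rw [(hφd x hxI).deriv]
    exact hppos x ⟨hx.1.le, hx.2⟩
  have hanti : StrictAntiOn φ (Icc x₁ 1) := by
    apply strictAntiOn_of_deriv_neg (convex_Icc x₁ 1)
      (hφc.mono (Icc_subset_Icc hx₁I.1 le_rfl))
    intro x hx
    rw [interior_Icc] at hx
    have hxI : x ∈ Icc (0:ℝ) 1 := ⟨by linarith [hx.1, hx₁0], hx.2.le⟩
    rw [(hφd x hxI).deriv]
    exact hpneg x ⟨hx.1, hx.2.le⟩
  -- change of variables
  have hD : ∀ x ∈ Icc (0:ℝ) 1, (A^2 - φ x^2) * (φ x^2 + (S - μ)) / 2 = p x ^ 2 := by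
    intro x hx
    linarith [factored x hx]
  have hGφc : ∀ G : ℝ → ℝ, Continuous G → ContinuousOn (fun x => G (φ x)) (Icc 0 1) :=
    fun G hG => hG.comp_continuousOn hφc
  have main : ∀ G : ℝ → ℝ, Continuous G →
      (∫ x in (0:ℝ)..1, G (φ x)) =
        2 * ∫ u in (0:ℝ)..A, G u / Real.sqrt ((A^2 - u^2) * (u^2 + (S - μ)) / 2) := by
    intro G hG
    set f : ℝ → ℝ := fun u => G u / Real.sqrt ((A^2 - u^2) * (u^2 + (S - μ)) / 2) with hfdef
    obtain ⟨C, hC⟩ := (isCompact_Icc (a := (0:ℝ)) (b := A)).exists_bound_of_continuousOn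
      hG.continuousOn
    have hC0 : 0 ≤ C := le_trans (norm_nonneg (G 0)) (hC 0 ⟨le_refl 0, hApos.le⟩)
    have hfint : IntervalIntegrable f volume 0 A := by
      have hbase : IntervalIntegrable (fun x : ℝ => x ^ (-(1/2) : ℝ)) volume 0 A :=
        intervalIntegrable_rpow' (by norm_num)
      have hrefl : IntervalIntegrable (fun x : ℝ => (A - x) ^ (-(1/2) : ℝ)) volume 0 A := by
        have := hbase.comp_sub_left A
        simpa using this.symm
      have hdom : IntervalIntegrable
          (fun x : ℝ => (C / Real.sqrt (A * (S - μ) / 2)) * (A - x) ^ (-(1/2) : ℝ))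
          volume 0 A := hrefl.const_mul _
      refine hdom.mono_fun ?_ ?_
      · refine Measurable.aestronglyMeasurable ?_
        exact hG.measurable.div ((Real.continuous_sqrt.comp (by fun_prop)).measurable)
      · filter_upwards [MeasureTheory.ae_restrict_mem measurableSet_uIoc] with u hu
        have hu' : u ∈ Ioc 0 A := by rwa [Set.uIoc_of_le hApos.le] at hu
        have hu0 : 0 < u := hu'.1
        have hsABpos : 0 < Real.sqrt (A * (S - μ) / 2) :=
          Real.sqrt_pos.2 (by positivity)
        have hRHSnn : 0 ≤ (C / Real.sqrt (A * (S - μ) / 2)) * (A - u) ^ (-(1/2):ℝ) :=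
          mul_nonneg (div_nonneg hC0 (Real.sqrt_nonneg _))
            (Real.rpow_nonneg (by linarith [hu'.2]) _)
        rw [Real.norm_eq_abs, Real.norm_eq_abs, abs_of_nonneg hRHSnn]
        rcases eq_or_lt_of_le hu'.2 with h' | h'
        · have hzero : ((A^2 - u^2) * (u^2 + (S - μ)) / 2 : ℝ) = 0 := by rw [h']; ring
          simp only [hfdef, hzero, Real.sqrt_zero, div_zero, abs_zero]
          exact hRHSnn
        · have e1 : (A - u) * A ≤ A^2 - u^2 := by nlinarith [hu0.le]
          have e2 : (S - μ) ≤ u^2 + (S - μ) := by nlinarith [sq_nonneg u]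
          have e0 : (0:ℝ) ≤ A^2 - u^2 := by nlinarith [hu0.le]
          have e3 : (A - u) * A * (S - μ) ≤ (A^2 - u^2) * (u^2 + (S - μ)) :=
            mul_le_mul e1 e2 hC2pos.le e0
          have e4 : (A - u) * (A * (S - μ) / 2) ≤ (A^2 - u^2) * (u^2 + (S - μ)) / 2 := by
            linarith
          have hs1pos : 0 < Real.sqrt (A - u) := Real.sqrt_pos.2 (by linarith)
          have hlow : Real.sqrt (A - u) * Real.sqrt (A * (S - μ) / 2) ≤
              Real.sqrt ((A^2 - u^2) * (u^2 + (S - μ)) / 2) := by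
            rw [← Real.sqrt_mul (by linarith : (0:ℝ) ≤ A - u)]
            exact Real.sqrt_le_sqrt e4
          have hbound : |f u| ≤ C / (Real.sqrt (A - u) * Real.sqrt (A * (S - μ) / 2)) := by
            simp only [hfdef]
            rw [abs_div, abs_of_nonneg (Real.sqrt_nonneg _)]
            exact div_le_div₀ hC0 (hC u ⟨hu0.le, hu'.2⟩) (mul_pos hs1pos hsABpos) hlow
          refine hbound.trans (le_of_eq ?_)
          rw [rpow_neg_half_eq (by linarith : (0:ℝ) ≤ A - u),
            mul_comm (Real.sqrt (A - u)), ← div_div, div_eq_mul_inv]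
    -- left change of variables
    have covL : ∀ y ∈ Ico (0:ℝ) x₁, (∫ x in (0:ℝ)..y, G (φ x)) = ∫ u in (0:ℝ)..(φ y), f u := by
      intro y hy
      have hy1 : y ≤ 1 := hy.2.le.trans hx₁I.2
      have huIcc : Set.uIcc (0:ℝ) y = Icc 0 y := uIcc_of_le hy.1
      have hsubx : ∀ x ∈ Set.uIcc (0:ℝ) y, x ∈ Icc (0:ℝ) 1 := by
        intro x hx
        rw [huIcc] at hx
        exact ⟨hx.1, hx.2.trans hy1⟩
      have hximg : ∀ u ∈ φ '' (Set.uIcc (0:ℝ) y), 0 ≤ u ∧ u < A := by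
        rintro u ⟨x, hx, rfl⟩
        rw [huIcc] at hx
        have hxI : x ∈ Icc (0:ℝ) 1 := ⟨hx.1, hx.2.trans hy1⟩
        refine ⟨φnn x hxI, ?_⟩
        have hle : φ x ≤ φ y := by
          rcases eq_or_lt_of_le hx.2 with h' | h'
          · rw [h']
          · exact (hmono ⟨hx.1, hx.2.trans hy.2.le⟩ ⟨hy.1, hy.2.le⟩ h').le
        have hlt : φ y < φ x₁ := hmono ⟨hy.1, hy.2.le⟩ ⟨hx₁I.1, le_refl x₁⟩ hy.2
        rw [hφx₁] at hlt
        linarith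
      have hfcont : ContinuousOn f (φ '' (Set.uIcc (0:ℝ) y)) := by
        apply ContinuousOn.div hG.continuousOn
          ((Real.continuous_sqrt.comp (by fun_prop)).continuousOn)
        intro u hu
        obtain ⟨hu0, huA⟩ := hximg u hu
        have hpos' : 0 < (A^2 - u^2) * (u^2 + (S - μ)) / 2 := by
          apply div_pos (mul_pos (by nlinarith) (by nlinarith [sq_nonneg u])) two_pos
        exact (Real.sqrt_pos.2 hpos').ne'
      have hcov := intervalIntegral.integral_comp_smul_deriv' (f := φ) (f' := p) (g := f)
        (a := (0:ℝ)) (b := y) (fun x hx => hφd x (hsubx x hx))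
        (hpc.mono hsubx) hfcont
      rw [h0] at hcov
      rw [← hcov]
      apply intervalIntegral.integral_congr
      intro x hx
      have hxI := hsubx x hx
      rw [huIcc] at hx
      have hpx : 0 < p x := hppos x ⟨hx.1, lt_of_le_of_lt hx.2 hy.2⟩
      have hDx : Real.sqrt ((A^2 - φ x^2) * (φ x^2 + (S - μ)) / 2) = p x := by
        rw [hD x hxI]
        exact Real.sqrt_sq hpx.le
      simp only [smul_eq_mul, hfdef, Function.comp]
      rw [hDx]
      field_simp
    -- right change of variables
    have covR : ∀ y ∈ Ioc x₁ 1, (∫ x in y..1, G (φ x)) = ∫ u in (0:ℝ)..(φ y), f u := by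
      intro y hy
      have hy0 : (0:ℝ) ≤ y := (hx₁0.trans hy.1).le
      have huIcc : Set.uIcc y (1:ℝ) = Icc y 1 := uIcc_of_le hy.2
      have hsubx : ∀ x ∈ Set.uIcc y (1:ℝ), x ∈ Icc (0:ℝ) 1 := by
        intro x hx
        rw [huIcc] at hx
        exact ⟨hy0.trans hx.1, hx.2⟩
      have hximg : ∀ u ∈ φ '' (Set.uIcc y (1:ℝ)), 0 ≤ u ∧ u < A := by
        rintro u ⟨x, hx, rfl⟩
        rw [huIcc] at hx
        have hxI : x ∈ Icc (0:ℝ) 1 := ⟨hy0.trans hx.1, hx.2⟩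
        refine ⟨φnn x hxI, ?_⟩
        have hle : φ x ≤ φ y := by
          rcases eq_or_lt_of_le hx.1 with h' | h'
          · rw [← h']
          · exact (hanti ⟨hy.1.le, hy.2⟩ ⟨hy.1.le.trans hx.1, hx.2⟩ h').le
        have hlt : φ y < φ x₁ := hanti ⟨le_refl x₁, hx₁I.2⟩ ⟨hy.1.le, hy.2⟩ hy.1
        rw [hφx₁] at hlt
        linarith
      have hfcont : ContinuousOn f (φ '' (Set.uIcc y (1:ℝ))) := by
        apply ContinuousOn.div hG.continuousOn
          ((Real.continuous_sqrt.comp (by fun_prop)).continuousOn)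
        intro u hu
        obtain ⟨hu0, huA⟩ := hximg u hu
        have hpos' : 0 < (A^2 - u^2) * (u^2 + (S - μ)) / 2 := by
          apply div_pos (mul_pos (by nlinarith) (by nlinarith [sq_nonneg u])) two_pos
        exact (Real.sqrt_pos.2 hpos').ne'
      have hcov := intervalIntegral.integral_comp_smul_deriv' (f := φ) (f' := p) (g := f)
        (a := y) (b := (1:ℝ)) (fun x hx => hφd x (hsubx x hx))
        (hpc.mono hsubx) hfcont
      rw [h1] at hcov
      have hLHS : (∫ x in y..1, p x • (f ∘ φ) x) = ∫ x in y..1, -(G (φ x)) := by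
        apply intervalIntegral.integral_congr
        intro x hx
        have hxI := hsubx x hx
        rw [huIcc] at hx
        have hpx : p x < 0 := hpneg x ⟨lt_of_lt_of_le hy.1 hx.1, hx.2⟩
        have hDx : Real.sqrt ((A^2 - φ x^2) * (φ x^2 + (S - μ)) / 2) = -(p x) := by
          rw [hD x hxI, Real.sqrt_sq_eq_abs]
          exact abs_of_neg hpx
        simp only [smul_eq_mul, hfdef, Function.comp]
        rw [hDx]
        rw [div_neg, mul_neg, ← mul_div_assoc, mul_div_cancel_left₀ _ hpx.ne]
      rw [hLHS] at hcov
      rw [intervalIntegral.integral_neg] at hcov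
      have hsymm : (∫ u in (φ y)..(0:ℝ), f u) = -∫ u in (0:ℝ)..(φ y), f u :=
        intervalIntegral.integral_symm 0 (φ y)
      rw [hsymm] at hcov
      linarith [hcov]
    -- limits
    have hP2 : ContinuousOn (fun v => ∫ u in (0:ℝ)..v, f u) (Icc 0 A) := by
      have := intervalIntegral.continuousOn_primitive_interval' hfint
        (left_mem_uIcc (a := (0:ℝ)) (b := A))
      rwa [Set.uIcc_of_le hApos.le] at this
    have hGφint : IntegrableOn (fun x => G (φ x)) (Icc (0:ℝ) 1) volume :=
      (hGφc G hG).integrableOn_Icc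
    have hP1 : ContinuousOn (fun y => ∫ x in (0:ℝ)..y, G (φ x)) (Icc 0 1) := by
      have := intervalIntegral.continuousOn_primitive_interval
        (a := (0:ℝ)) (b := (1:ℝ)) (μ := volume) (f := fun x => G (φ x))
        (by rwa [Set.uIcc_of_le (by norm_num : (0:ℝ) ≤ 1)])
      rwa [Set.uIcc_of_le (by norm_num : (0:ℝ) ≤ 1)] at this
    have hφmaps : ∀ x ∈ Icc (0:ℝ) 1, φ x ∈ Icc 0 A := fun x hx => ⟨φnn x hx, hφleA x hx⟩
    have covLlim : (∫ x in (0:ℝ)..x₁, G (φ x)) = ∫ u in (0:ℝ)..A, f u := by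
      have hsubIoo : Ioo (0:ℝ) x₁ ⊆ Icc 0 1 :=
        fun z hz => ⟨hz.1.le, hz.2.le.trans hx₁I.2⟩
      have t1 : Filter.Tendsto (fun y => ∫ x in (0:ℝ)..y, G (φ x))
          (nhdsWithin x₁ (Ioo 0 x₁)) (nhds (∫ x in (0:ℝ)..x₁, G (φ x))) :=
        ((hP1 x₁ hx₁I).mono_left (nhdsWithin_mono x₁ hsubIoo))
      have hφtend : Filter.Tendsto φ (nhdsWithin x₁ (Ioo 0 x₁)) (nhdsWithin A (Icc 0 A)) := by
        rw [tendsto_nhdsWithin_iff]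
        constructor
        · have hcw := ((hφc x₁ hx₁I).mono_left (nhdsWithin_mono x₁ hsubIoo))
          rw [hφx₁] at hcw
          exact hcw
        · filter_upwards [self_mem_nhdsWithin] with z hz
          exact hφmaps z (hsubIoo hz)
      have t2 : Filter.Tendsto (fun y => ∫ u in (0:ℝ)..(φ y), f u)
          (nhdsWithin x₁ (Ioo 0 x₁)) (nhds (∫ u in (0:ℝ)..A, f u)) := by
        have hcw : ContinuousWithinAt (fun v => ∫ u in (0:ℝ)..v, f u) (Icc 0 A) A :=
          hP2 A ⟨hApos.le, le_refl A⟩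
        exact hcw.tendsto.comp hφtend
      have heqev : ∀ᶠ y in nhdsWithin x₁ (Ioo 0 x₁),
          (∫ x in (0:ℝ)..y, G (φ x)) = ∫ u in (0:ℝ)..(φ y), f u := by
        filter_upwards [self_mem_nhdsWithin] with y hy
        exact covL y ⟨hy.1.le, hy.2⟩
      haveI hNB : (nhdsWithin x₁ (Ioo 0 x₁)).NeBot := by
        rw [nhdsWithin_Ioo_eq_nhdsLT hx₁0]
        infer_instance
      exact tendsto_nhds_unique (t1.congr' heqev) t2
    have covRlim : (∫ x in x₁..1, G (φ x)) = ∫ u in (0:ℝ)..A, f u := by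
      have hsubIoo : Ioo x₁ (1:ℝ) ⊆ Icc 0 1 :=
        fun z hz => ⟨(hx₁0.trans hz.1).le, hz.2.le⟩
      have hP1' : ContinuousOn (fun y => ∫ x in y..(1:ℝ), G (φ x)) (Icc 0 1) := by
        have := intervalIntegral.continuousOn_primitive_interval_left
          (a := (0:ℝ)) (b := (1:ℝ)) (μ := volume) (f := fun x => G (φ x))
          (by rwa [Set.uIcc_of_le (by norm_num : (0:ℝ) ≤ 1)])
        rwa [Set.uIcc_of_le (by norm_num : (0:ℝ) ≤ 1)] at this
      have t1 : Filter.Tendsto (fun y => ∫ x in y..(1:ℝ), G (φ x))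
          (nhdsWithin x₁ (Ioo x₁ 1)) (nhds (∫ x in x₁..1, G (φ x))) :=
        ((hP1' x₁ hx₁I).mono_left (nhdsWithin_mono x₁ hsubIoo))
      have hφtend : Filter.Tendsto φ (nhdsWithin x₁ (Ioo x₁ 1)) (nhdsWithin A (Icc 0 A)) := by
        rw [tendsto_nhdsWithin_iff]
        constructor
        · have hcw := ((hφc x₁ hx₁I).mono_left (nhdsWithin_mono x₁ hsubIoo))
          rw [hφx₁] at hcw
          exact hcw
        · filter_upwards [self_mem_nhdsWithin] with z hz
          exact hφmaps z (hsubIoo hz)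
      have t2 : Filter.Tendsto (fun y => ∫ u in (0:ℝ)..(φ y), f u)
          (nhdsWithin x₁ (Ioo x₁ 1)) (nhds (∫ u in (0:ℝ)..A, f u)) := by
        have hcw : ContinuousWithinAt (fun v => ∫ u in (0:ℝ)..v, f u) (Icc 0 A) A :=
          hP2 A ⟨hApos.le, le_refl A⟩
        exact hcw.tendsto.comp hφtend
      have heqev : ∀ᶠ y in nhdsWithin x₁ (Ioo x₁ 1),
          (∫ x in y..(1:ℝ), G (φ x)) = ∫ u in (0:ℝ)..(φ y), f u := by
        filter_upwards [self_mem_nhdsWithin] with y hy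
        exact covR y ⟨hy.1, hy.2.le⟩
      haveI hNB : (nhdsWithin x₁ (Ioo x₁ 1)).NeBot := by
        rw [nhdsWithin_Ioo_eq_nhdsGT hx₁1]
        infer_instance
      exact tendsto_nhds_unique (t1.congr' heqev) t2
    have hint1 : IntervalIntegrable (fun x => G (φ x)) volume 0 x₁ := by
      apply ContinuousOn.intervalIntegrable
      apply (hGφc G hG).mono
      rw [Set.uIcc_of_le hx₁I.1]
      exact Icc_subset_Icc le_rfl hx₁I.2
    have hint2 : IntervalIntegrable (fun x => G (φ x)) volume x₁ 1 := by
      apply ContinuousOn.intervalIntegrable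
      apply (hGφc G hG).mono
      rw [Set.uIcc_of_le hx₁I.2]
      exact Icc_subset_Icc hx₁I.1 le_rfl
    have hsplit := intervalIntegral.integral_add_adjacent_intervals hint1 hint2
    calc (∫ x in (0:ℝ)..1, G (φ x))
        = (∫ x in (0:ℝ)..x₁, G (φ x)) + ∫ x in x₁..1, G (φ x) := hsplit.symm
      _ = 2 * ∫ u in (0:ℝ)..A, f u := by rw [covLlim, covRlim]; ring
  -- rescale to the normalized integrals
  obtain ⟨m, hmdef⟩ : ∃ s : ℝ, s = 2*μ/A^2 := ⟨_, rfl⟩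
  have hA0 : A ≠ 0 := hApos.ne'
  have hmA : m * A^2 = 2*μ := by
    rw [hmdef]
    field_simp
  have hm1 : m < 1 := by
    rw [hmdef, div_lt_one (by positivity)]
    nlinarith [habs.2, hAsq]
  have hSμA : S - μ = A^2 - 2*μ := by linarith [hAsq]
  have hptwise : ∀ j : ℕ, ∀ t ∈ Icc (0:ℝ) 1,
      (A*t)^j / Real.sqrt ((A^2 - (A*t)^2) * ((A*t)^2 + (S - μ)) / 2)
        = (Real.sqrt 2 * A^j / A^2) * (t^j / Real.sqrt ((1 - t^2)*(t^2+1-m))) := by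
    intro j t htI
    have hinner : ((A^2 - (A*t)^2) * ((A*t)^2 + (S - μ)) / 2)
        = (A^2/Real.sqrt 2)^2 * ((1 - t^2)*(t^2+1-m)) := by
      have hsq2' : (A^2/Real.sqrt 2)^2 = A^4/2 := by
        rw [div_pow, Real.sq_sqrt (by norm_num : (0:ℝ) ≤ 2)]
        ring
      rw [hsq2']
      linear_combination ((A^2 - A^2*t^2)/2) * hSμA + ((A^2 - A^2*t^2)/2) * hmA
    rw [hinner]
    rw [Real.sqrt_mul (sq_nonneg _), Real.sqrt_sq (by positivity)]
    rw [mul_pow]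
    ring_nf
    rw [inv_inv]
    ring
  have hscale : ∀ j : ℕ,
      (∫ u in (0:ℝ)..A, u^j / Real.sqrt ((A^2 - u^2) * (u^2 + (S - μ)) / 2))
        = (Real.sqrt 2 * A^j / A) * gInt j m := by
    intro j
    have hcomp := intervalIntegral.smul_integral_comp_mul_left
      (f := fun u => u^j / Real.sqrt ((A^2 - u^2) * (u^2 + (S - μ)) / 2))
      (c := A) (a := (0:ℝ)) (b := (1:ℝ))
    rw [mul_zero, mul_one] at hcomp
    rw [← hcomp]
    have hcong : (∫ t in (0:ℝ)..1,
        (A*t)^j / Real.sqrt ((A^2 - (A*t)^2) * ((A*t)^2 + (S - μ)) / 2))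
        = (Real.sqrt 2 * A^j / A^2) * gInt j m := by
      rw [gInt, ← intervalIntegral.integral_const_mul]
      apply intervalIntegral.integral_congr
      intro t ht
      rw [Set.uIcc_of_le (by norm_num : (0:ℝ) ≤ 1)] at ht
      exact hptwise j t ht
    rw [smul_eq_mul, hcong]
    field_simp
  -- constraint from G = 1
  have hconst := main (fun _ => (1:ℝ)) continuous_const
  simp only [intervalIntegral.integral_const, smul_eq_mul, sub_zero, mul_one] at hconst
  have hs0 := hscale 0
  simp only [pow_zero, mul_one] at hs0
  rw [hs0] at hconst
  have hg0pos : 0 < gInt 0 m := gInt_pos 0 hm1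
  have hA_eq : A = 2 * Real.sqrt 2 * gInt 0 m := by
    field_simp at hconst
    linarith [hconst]
  have h2s : Real.sqrt 2 * Real.sqrt 2 = 2 :=
    Real.mul_self_sqrt (by norm_num : (0:ℝ) ≤ 2)
  have hA2 : A^2 = 8 * gInt 0 m^2 := by
    rw [hA_eq]
    rw [mul_pow, mul_pow, Real.sq_sqrt (by norm_num : (0:ℝ) ≤ 2)]
    ring
  refine ⟨m, hm1, ?_, ?_⟩
  · linear_combination (-(1:ℝ)/2) * hmA + (m/2) * hA2
  · have hsq2 := main (fun u => u^2) (continuous_pow 2)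
    have hs2 := hscale 2
    rw [hs2] at hsq2
    have hAA : Real.sqrt 2 * A ^ 2 / A = Real.sqrt 2 * A := by
      field_simp
    rw [hAA] at hsq2
    rw [hsq2, hA_eq]
    linear_combination (4 * gInt 0 m * gInt 2 m) * h2s

/-- Vakhitov–Kolokolov condition: the squared `L²` norm of the focusing
ground state, `μ ↦ ∫₀¹ φ_μ²`, is strictly increasing on `(-π², ∞)`. -/
theorem stmt_4 (φ : ℝ → ℝ → ℝ)
    (hφ : ∀ μ ∈ Set.Ioi (-Real.pi ^ 2), IsGroundState μ (φ μ)) :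
    StrictMonoOn (fun μ => ∫ x in (0:ℝ)..1, φ μ x ^ 2)
      (Set.Ioi (-Real.pi ^ 2)) := by
  intro μ₁ h₁ μ₂ h₂ h12
  obtain ⟨m₁, hm₁1, hμ₁, hI₁⟩ := ground_state_key (hφ μ₁ h₁)
  obtain ⟨m₂, hm₂1, hμ₂, hI₂⟩ := ground_state_key (hφ μ₂ h₂)
  have hmm : m₁ < m₂ := by
    by_contra hcon
    push_neg at hcon
    rcases eq_or_lt_of_le hcon with h' | h'
    · rw [hμ₁, hμ₂, h'] at h12
      exact lt_irrefl _ h12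
    · have := muMap_strictMono h' hm₁1
      rw [← hμ₁, ← hμ₂] at this
      linarith
  simp only
  rw [hI₁, hI₂]
  have g01 := gInt_pos 0 hm₁1
  have g21 := gInt_pos 2 hm₁1
  have h0m := gInt_strictMono 0 hmm hm₂1
  have h2m := gInt_strictMono 2 hmm hm₂1
  nlinarith [gInt_pos 0 hm₂1, gInt_pos 2 hm₂1]
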